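/- Let S be a semiring, μ : Σ_r^* → S^{n×n} a monoid morphism, and define κ : {b,c}^* → S^{rn×rn} with κ(b) = [0_{n,(r-1)n} blocks stacked with μ(a_1),...,μ(a_r) in first block column] as in the first embedding, and the coding δ(a_{i_1}...a_{i_k}) = c^{i_1-1}b···c^{i_k-1}b. Then for all z ∈ Σ_r^*, κ(δ(a_r z)) = diag(μ(a_r z), 0_{(r-1)n×(r-1)n}), i.e. the block matrix with μ(a_r z) in the top-left n×n block and zeros elsewhere. -/

import Mathlib

open Matrix

/-- Images of the two generators `b` (letter `0`) and `c` (letter `1`) under the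
first embedding: `κ(b)` has block rows `[μ(a_i), 0]` for `i = 1,…,r+1`, and
`κ(c) = [0, I_{rn}; 0, 0]`. Here the alphabet is `Fin (r+1)`, so the number of
letters is `r+1 ≥ 1`, and the last letter is `Fin.last r`. -/
def firstEmbGen {S : Type*} [Semiring S] {r n : ℕ}
    (μ : FreeMonoid (Fin (r + 1)) →* Matrix (Fin n) (Fin n) S) :
    Fin 2 → Matrix (Fin (r + 1) × Fin n) (Fin (r + 1) × Fin n) S := fun x =>
  if x = 0 then
    Matrix.of fun p q => if q.1 = 0 then μ (FreeMonoid.of p.1) p.2 q.2 else 0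
  else
    Matrix.of fun p q => if (q.1 : ℕ) = (p.1 : ℕ) + 1 ∧ p.2 = q.2 then 1 else 0

/-- The first embedding `κ : {b,c}^* → S^{(r+1)n×(r+1)n}`. -/
def firstEmb {S : Type*} [Semiring S] {r n : ℕ}
    (μ : FreeMonoid (Fin (r + 1)) →* Matrix (Fin n) (Fin n) S) :
    FreeMonoid (Fin 2) →* Matrix (Fin (r + 1) × Fin n) (Fin (r + 1) × Fin n) S :=
  FreeMonoid.lift (firstEmbGen μ)

/-- The coding `δ(a_{i_1}⋯a_{i_k}) = c^{i_1-1}b ⋯ c^{i_k-1}b` (`b = 0`, `c = 1`,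
letters of `Σ_{r+1}` are `0`-indexed). -/
def coding {r : ℕ} : FreeMonoid (Fin (r + 1)) →* FreeMonoid (Fin 2) :=
  FreeMonoid.lift fun i => (FreeMonoid.of (1 : Fin 2)) ^ (i : ℕ) * FreeMonoid.of (0 : Fin 2)

def NN {S : Type*} [Semiring S] {r n : ℕ}
    (μ : FreeMonoid (Fin (r + 1)) →* Matrix (Fin n) (Fin n) S) (k : ℕ)
    (z : FreeMonoid (Fin (r + 1))) :
    Matrix (Fin (r + 1) × Fin n) (Fin (r + 1) × Fin n) S :=
  Matrix.of fun p q =>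
    if h : (p.1 : ℕ) + k ≤ r ∧ q.1 = 0 then
      μ (FreeMonoid.of ⟨(p.1 : ℕ) + k, by omega⟩ * z) p.2 q.2 else 0

lemma kc_mul_NN {S : Type*} [Semiring S] {r n : ℕ}
    (μ : FreeMonoid (Fin (r + 1)) →* Matrix (Fin n) (Fin n) S) (k : ℕ)
    (z : FreeMonoid (Fin (r + 1))) :
    firstEmbGen μ 1 * NN μ k z = NN μ (k + 1) z := by
  ext ⟨j, p⟩ ⟨l, q⟩
  rw [Matrix.mul_apply]
  simp only [firstEmbGen, NN, Matrix.of_apply, if_neg (one_ne_zero : (1 : Fin 2) ≠ 0)]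
  by_cases hj : (j : ℕ) + 1 ≤ r
  · rw [Finset.sum_eq_single (⟨(j : ℕ) + 1, by omega⟩, p)]
    · rw [if_pos ⟨rfl, rfl⟩, one_mul]
      simp only [show (j : ℕ) + 1 + k = (j : ℕ) + (k + 1) from by omega]
    · rintro ⟨m1, m2⟩ - hne
      rw [if_neg, zero_mul]
      rintro ⟨h1, h2⟩
      exact hne (Prod.ext_iff.mpr ⟨Fin.ext h1, h2.symm⟩)
    · simp
  · have h0 : ¬((j : ℕ) + (k + 1) ≤ r ∧ l = 0) := fun hc => absurd hc.1 (by omega)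
    rw [dif_neg h0]
    refine Finset.sum_eq_zero ?_
    rintro ⟨m1, m2⟩ -
    rw [if_neg, zero_mul]
    rintro ⟨h1, -⟩
    have := m1.isLt
    omega

lemma kck_kb {S : Type*} [Semiring S] {r n : ℕ}
    (μ : FreeMonoid (Fin (r + 1)) →* Matrix (Fin n) (Fin n) S) (k : ℕ) :
    (firstEmbGen μ 1) ^ k * firstEmbGen μ 0 = NN μ k 1 := by
  induction k with
  | zero =>
      ext ⟨j, p⟩ ⟨l, q⟩
      simp [firstEmbGen, NN, Fin.is_le j]
  | succ k ih =>
      rw [pow_succ', mul_assoc, ih, kc_mul_NN]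

lemma NN_mul_NN {S : Type*} [Semiring S] {r n : ℕ}
    (μ : FreeMonoid (Fin (r + 1)) →* Matrix (Fin n) (Fin n) S) (k : ℕ)
    (i : Fin (r + 1)) (z : FreeMonoid (Fin (r + 1))) :
    NN μ k 1 * NN μ (i : ℕ) z = NN μ k (FreeMonoid.of i * z) := by
  ext ⟨j, p⟩ ⟨l, q⟩
  rw [Matrix.mul_apply]
  simp only [NN, Matrix.of_apply]
  by_cases H : (j : ℕ) + k ≤ r ∧ l = 0
  · rw [dif_pos H, Fintype.sum_prod_type, Finset.sum_eq_single (0 : Fin (r + 1))]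
    · have hi : ((0 : Fin (r + 1)) : ℕ) + (i : ℕ) ≤ r := by
        have := i.isLt; simp; omega
      have he : (⟨((0 : Fin (r + 1)) : ℕ) + (i : ℕ), by omega⟩ : Fin (r + 1)) = i := by
        ext; simp
      simp only [H.1, H.2, hi, he, true_and, and_true, and_self, dite_true, mul_one]
      conv_rhs => rw [_root_.map_mul, Matrix.mul_apply]
    · intro m1 _ hm
      refine Finset.sum_eq_zero fun m2 _ => ?_
      rw [dif_neg fun hc : (j : ℕ) + k ≤ r ∧ (m1, m2).1 = 0 => absurd hc.2 hm, zero_mul]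
    · simp
  · rw [dif_neg H]
    refine Finset.sum_eq_zero ?_
    rintro ⟨m1, m2⟩ -
    rcases not_and_or.mp H with h | h
    · rw [dif_neg fun hc : (j : ℕ) + k ≤ r ∧ (m1, m2).1 = 0 => absurd hc.1 h, zero_mul]
    · rw [dif_neg fun hc : ((m1, m2).1 : ℕ) + (i : ℕ) ≤ r ∧ l = 0 => absurd hc.2 h, mul_zero]

lemma firstEmb_coding_of {S : Type*} [Semiring S] {r n : ℕ}
    (μ : FreeMonoid (Fin (r + 1)) →* Matrix (Fin n) (Fin n) S) (i : Fin (r + 1)) :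
    firstEmb μ (coding (FreeMonoid.of i)) = NN μ (i : ℕ) 1 := by
  rw [coding, FreeMonoid.lift_eval_of, _root_.map_mul, map_pow, firstEmb,
    FreeMonoid.lift_eval_of, FreeMonoid.lift_eval_of, kck_kb]

lemma firstEmb_coding {S : Type*} [Semiring S] {r n : ℕ}
    (μ : FreeMonoid (Fin (r + 1)) →* Matrix (Fin n) (Fin n) S)
    (i : Fin (r + 1)) (z : FreeMonoid (Fin (r + 1))) :
    firstEmb μ (coding (FreeMonoid.of i * z)) = NN μ (i : ℕ) z := by
  induction z using FreeMonoid.inductionOn' generalizing i with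
  | one => rw [mul_one, firstEmb_coding_of]
  | of_mul i' z ih =>
      rw [_root_.map_mul coding, _root_.map_mul, ih, firstEmb_coding_of, NN_mul_NN]

/-- For any word beginning with the last letter `a_{r+1}`,
`κ(δ(a_{r+1} z)) = diag(μ(a_{r+1} z), 0)`: the top-left `n×n` block is
`μ(a_{r+1} z)` and all other blocks vanish. -/
theorem firstEmb_last_letter {S : Type*} [Semiring S] {r n : ℕ}
    (μ : FreeMonoid (Fin (r + 1)) →* Matrix (Fin n) (Fin n) S)
    (z : FreeMonoid (Fin (r + 1))) (j l : Fin (r + 1)) (p q : Fin n) :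
    firstEmb μ (coding (FreeMonoid.of (Fin.last r) * z)) (j, p) (l, q)
      = if j = 0 ∧ l = 0 then μ (FreeMonoid.of (Fin.last r) * z) p q else 0 := by
  rw [firstEmb_coding]
  simp only [NN, Matrix.of_apply, Fin.val_last]
  by_cases hj : j = 0
  · subst hj
    by_cases hl : l = 0
    · have hfin : (⟨((0 : Fin (r + 1)) : ℕ) + r, by simp only [Fin.val_zero]; omega⟩ : Fin (r + 1)) = Fin.last r := by
        ext; simp
      rw [dif_pos ⟨by simp, hl⟩, hfin, if_pos ⟨rfl, hl⟩]
    · rw [dif_neg fun hc : (0 : Fin (r+1)).val + r ≤ r ∧ l = 0 => absurd hc.2 hl,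
        if_neg fun hc : (0 : Fin (r+1)) = 0 ∧ l = 0 => absurd hc.2 hl]
  · rw [dif_neg, if_neg fun hc : j = 0 ∧ l = 0 => absurd hc.1 hj]
    rintro ⟨h1, -⟩
    refine hj (Fin.ext ?_)
    simp only [Fin.val_zero]
    omega
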